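/- The s-Partition Encoding Scheme is unbiased: for every nonzero vector g ∈ ℝ^d and every positive integer s, the decoded random vector φ'(g) satisfies E[φ'(g) | g] = g. -/

import Mathlib

open MeasureTheory ProbabilityTheory
open scoped ProbabilityTheory

/-- The s-Partition Encoding Scheme is unbiased.
For a nonzero vector `g : Fin d → ℝ` (here `‖g‖` is the sup norm, since `Fin d → ℝ`
carries the `Pi` norm), a positive integer `s`, levels `l i < s` with
`l i / s ≤ |g i| / ‖g‖ ≤ (l i + 1) / s`, and random variables `b i` taking the value
`l i / s` with probability `1 - s·|g i|/‖g‖ + l i` and the value `(l i + 1)/s` with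
probability `s·|g i|/‖g‖ - l i`, the decoded vector
`φ'(g) i = sign (g i) · b i · ‖g‖` satisfies `E[φ'(g)] = g` coordinatewise. -/
theorem stmt0 {Ω : Type*} [MeasureSpace Ω] [IsProbabilityMeasure (ℙ : Measure Ω)]
    {d : ℕ} (g : Fin d → ℝ) (hg : g ≠ 0) (s : ℕ) (hs : 0 < s)
    (l : Fin d → ℕ) (hl : ∀ i, l i < s)
    (hlo : ∀ i, (l i : ℝ) / s ≤ |g i| / ‖g‖)
    (hhi : ∀ i, |g i| / ‖g‖ ≤ ((l i : ℝ) + 1) / s)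
    (b : Fin d → Ω → ℝ)
    (hbmeas : ∀ i, Measurable (b i))
    (hbval : ∀ i, ∀ ω, b i ω = (l i : ℝ) / s ∨ b i ω = ((l i : ℝ) + 1) / s)
    (hblow : ∀ i, ℙ {ω | b i ω = (l i : ℝ) / s}
      = ENNReal.ofReal (1 - s * (|g i| / ‖g‖) + l i))
    (hbhigh : ∀ i, ℙ {ω | b i ω = ((l i : ℝ) + 1) / s}
      = ENNReal.ofReal (s * (|g i| / ‖g‖) - l i)) :
    ∀ i, (∫ ω, Real.sign (g i) * b i ω * ‖g‖) = g i := by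
  intro i
  have hgn : (0:ℝ) < ‖g‖ := norm_pos_iff.mpr hg
  have hsr : (0:ℝ) < (s:ℝ) := by exact_mod_cast hs
  set t : ℝ := |g i| / ‖g‖ with ht
  set A : Set Ω := {ω | b i ω = ((l i : ℝ) + 1) / s} with hA
  have hAm : MeasurableSet A := (hbmeas i) (measurableSet_singleton _)
  have hne : ((l i : ℝ)) / s ≠ ((l i : ℝ) + 1) / s := by
    intro h
    field_simp at h
    linarith
  have hbeq : ∀ ω, b i ω = (l i : ℝ) / s + A.indicator (fun _ => (1:ℝ)/s) ω := by
    intro ω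
    rcases hbval i ω with h | h
    · have hω : ω ∉ A := by
        simp only [hA, Set.mem_setOf_eq, h]
        exact hne
      simp [Set.indicator_of_notMem hω, h]
    · have hω : ω ∈ A := h
      simp only [Set.indicator_of_mem hω, h]
      ring
  have hμA : (ℙ A).toReal = s * t - (l i : ℝ) := by
    rw [hA, hbhigh i, ENNReal.toReal_ofReal]
    have h2 : (l i : ℝ) ≤ s * t := by
      have := hlo i
      rw [div_le_div_iff₀ hsr hgn] at this
      rw [← mul_div_assoc, le_div_iff₀ hgn]
      linarith
    linarith
  have hInt : (∫ ω, b i ω) = t := by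
    rw [integral_congr_ae (Filter.Eventually.of_forall hbeq)]
    rw [integral_add (integrable_const _) ((integrable_const _).indicator hAm)]
    rw [integral_indicator_const _ hAm]
    simp only [integral_const, measureReal_def, measure_univ, ENNReal.toReal_one, one_smul, smul_eq_mul]
    rw [hμA]
    field_simp
    ring
  have : (∫ ω, Real.sign (g i) * b i ω * ‖g‖)
      = Real.sign (g i) * ((∫ ω, b i ω) * ‖g‖) := by
    simp only [mul_assoc]
    rw [integral_const_mul]
    congr 1
    exact integral_mul_const _ _
  rw [this, hInt, ht, div_mul_cancel₀ _ (ne_of_gt hgn)]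
  rcases lt_trichotomy (g i) 0 with h | h | h
  · rw [Real.sign_of_neg h, abs_of_neg h]; ring
  · simp [h]
  · rw [Real.sign_of_pos h, abs_of_pos h]; ring
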